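/- arXiv:1003.3099 — 4 statements merged into one kernel-verified Lean document; each statement's English description precedes it below -/
import Mathlib

section
/- Let α ≥ 3/2, β ≥ 1 with α ≥ (β + √(β²+3))/2, and let r satisfy ln(1/(1-r)) ≥ 2(α+1). If s ≥ α/(1-r) − 1/(2α(1-r) ln(1/(1-r))) − 2/((1-r) ln²(1/(1-r))) ≥ 0, then 1/(4(1-r)²) + s² − (αβ)/(1-r)² ≥ (1/(1-r) − 1/(2(1-r) ln(1/(1-r))) − 2(α+1)/((1-r) ln²(1/(1-r))))². -/
set_option maxHeartbeats 1600000

open Real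

theorem stmt5 (α β r s : ℝ) (hα : 3/2 ≤ α) (hβ : 1 ≤ β)
    (hαβ : (β + Real.sqrt (β^2 + 3)) / 2 ≤ α)
    (hr0 : 0 < r) (hr1 : r < 1)
    (hlog : 2*(α+1) ≤ Real.log (1/(1-r)))
    (hs : s ≥ α/(1-r) - 1/(2*α*(1-r)*Real.log (1/(1-r)))
        - 2/((1-r) * (Real.log (1/(1-r)))^2))
    (hpos : 0 ≤ α/(1-r) - 1/(2*α*(1-r)*Real.log (1/(1-r)))
        - 2/((1-r) * (Real.log (1/(1-r)))^2)) :
    1/(4*(1-r)^2) + s^2 - (α*β)/(1-r)^2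
      ≥ (1/(1-r) - 1/(2*(1-r)*Real.log (1/(1-r)))
          - 2*(α+1)/((1-r) * (Real.log (1/(1-r)))^2))^2 := by
  set L := Real.log (1/(1-r)) with hLdef
  set t := 1 - r with htdef
  have ht : (0:ℝ) < t := by simp [htdef]; linarith
  have hα0 : (0:ℝ) < α := by linarith
  have hL5 : (5:ℝ) ≤ L := by linarith
  have hL0 : (0:ℝ) < L := by linarith
  -- key inequality from hαβ
  have hsq : Real.sqrt (β^2+3) ^ 2 = β^2 + 3 := Real.sq_sqrt (by positivity)
  have hsnn : 0 ≤ Real.sqrt (β^2+3) := Real.sqrt_nonneg _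
  have key : 3 ≤ 4*α^2 - 4*α*β := by nlinarith [hαβ, hsq, hsnn]
  -- s^2 ≥ A^2
  have hA2 : (α/t - 1/(2*α*t*L) - 2/(t * L^2))^2 ≤ s^2 :=
    pow_le_pow_left₀ hpos hs 2
  -- numerator nonneg
  have hN : 0 ≤ (2*α^2*L^2 - L - 4*α)^2 + α^2*L^4 - 4*α^3*β*L^4
      - α^2*(2*L^2 - L - 4*(α+1))^2 := by
    nlinarith [mul_nonneg (mul_nonneg (by nlinarith : (0:ℝ) ≤ 4*α^2 - 4*α*β - 3) (sq_nonneg α)) (sq_nonneg (L^2)),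
      mul_pos hL0 hL0, sq_nonneg (L - 2*(α+1)), sq_nonneg L, sq_nonneg α,
      mul_nonneg (le_of_lt hα0) (le_of_lt hL0),
      mul_nonneg (mul_nonneg (le_of_lt hα0) (le_of_lt hα0)) (sq_nonneg (L - 2*(α+1))),
      mul_nonneg (sq_nonneg α) (mul_nonneg (le_of_lt hL0) (by linarith : (0:ℝ) ≤ L - 2*(α+1)))]
  have hid : 1/(4*t^2) + (α/t - 1/(2*α*t*L) - 2/(t * L^2))^2 - (α*β)/t^2
      - (1/t - 1/(2*t*L) - 2*(α+1)/(t * L^2))^2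
      = ((2*α^2*L^2 - L - 4*α)^2 + α^2*L^4 - 4*α^3*β*L^4
        - α^2*(2*L^2 - L - 4*(α+1))^2) / (4*α^2*L^4*t^2) := by
    field_simp
    ring
  have hden : 0 < 4*α^2*L^4*t^2 := by positivity
  have hfrac : 0 ≤ ((2*α^2*L^2 - L - 4*α)^2 + α^2*L^4 - 4*α^3*β*L^4
        - α^2*(2*L^2 - L - 4*(α+1))^2) / (4*α^2*L^4*t^2) := div_nonneg hN (le_of_lt hden)
  linarith [hid, hfrac, hA2]
end

section
/- Let G : (0, 1/2) → ℝ be differentiable with 1/(2t) ≤ G'(t) ≤ 1/t on (0, d₀) for some 0 < d₀ < 1/2, and let 0 < ρ₀ ≤ d₀/2. Then (1/ρ₀²)∫₀^{ρ₀} t e^{−2G(t)} dt ≤ Σ_{n=1}^∞ 4^{−n} e^{−2G(2^{−n}ρ₀)} ≤ (2/ρ₀²)∫₀^{ρ₀/2} t e^{−2G(t)} dt. -/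
open Real Set MeasureTheory

-- dyadic union lemma
lemma dyadic_union (ρ : ℝ) (hρ : 0 < ρ) :
    (⋃ n : ℕ, Set.Ico ((2:ℝ)⁻¹^(n+1) * ρ) ((2:ℝ)⁻¹^n * ρ)) = Set.Ioo 0 ρ := by
  ext x
  simp only [Set.mem_iUnion, Set.mem_Ico, Set.mem_Ioo]
  constructor
  · rintro ⟨n, h1, h2⟩
    constructor
    · exact lt_of_lt_of_le (by positivity) h1
    · calc x < (2:ℝ)⁻¹^n * ρ := h2
        _ ≤ (2:ℝ)⁻¹^0 * ρ := by
            apply mul_le_mul_of_nonneg_right _ hρ.le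
            exact pow_le_pow_of_le_one (by norm_num) (by norm_num) (Nat.zero_le n)
        _ = ρ := by norm_num
  · rintro ⟨hx0, hxρ⟩
    have hex : ∃ n : ℕ, (2:ℝ)⁻¹^n * ρ ≤ x := by
      obtain ⟨n, hn⟩ := exists_pow_lt_of_lt_one (show (0:ℝ) < x / ρ by positivity)
        (show (2:ℝ)⁻¹ < 1 by norm_num)
      exact ⟨n, by rw [← le_div_iff₀ hρ] at *; exact hn.le⟩
    classical
    set N := Nat.find hex with hN
    have hNle : (2:ℝ)⁻¹^N * ρ ≤ x := Nat.find_spec hex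
    have hNne : N ≠ 0 := by
      intro h
      rw [h] at hNle
      simp at hNle
      linarith
    obtain ⟨m, hm⟩ := Nat.exists_eq_succ_of_ne_zero hNne
    refine ⟨m, ?_, ?_⟩
    · simpa [hm] using hNle
    · by_contra h
      push_neg at h
      have := Nat.find_min hex (by rw [hm]; exact Nat.lt_succ_self m : m < N)
      exact this h

lemma dyadic_disj (ρ : ℝ) (hρ : 0 < ρ) :
    Pairwise (Function.onFun Disjoint
      (fun n : ℕ => Set.Ico ((2:ℝ)⁻¹^(n+1) * ρ) ((2:ℝ)⁻¹^n * ρ))) := by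
  have key : ∀ m n : ℕ, m < n → Disjoint (Set.Ico ((2:ℝ)⁻¹^(m+1) * ρ) ((2:ℝ)⁻¹^m * ρ))
      (Set.Ico ((2:ℝ)⁻¹^(n+1) * ρ) ((2:ℝ)⁻¹^n * ρ)) := by
    intro m n hmn
    rw [Set.Ico_disjoint_Ico]
    have h1 : (2:ℝ)⁻¹^n * ρ ≤ (2:ℝ)⁻¹^(m+1) * ρ := by
      apply mul_le_mul_of_nonneg_right _ hρ.le
      exact pow_le_pow_of_le_one (by norm_num) (by norm_num) hmn
    calc min ((2:ℝ)⁻¹^m * ρ) ((2:ℝ)⁻¹^n * ρ) ≤ (2:ℝ)⁻¹^n * ρ := min_le_right _ _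
      _ ≤ (2:ℝ)⁻¹^(m+1) * ρ := h1
      _ ≤ max ((2:ℝ)⁻¹^(m+1) * ρ) ((2:ℝ)⁻¹^(n+1) * ρ) := le_max_left _ _
  intro m n hmn
  rcases lt_or_gt_of_ne hmn with h | h
  · exact key m n h
  · exact (key n m h).symm

theorem stmt8 (G g : ℝ → ℝ) (d₀ ρ₀ : ℝ) (hd₀ : 0 < d₀) (hd₀' : d₀ < 1/2)
    (hG : ∀ t ∈ Set.Ioo (0:ℝ) (1/2), HasDerivAt G (g t) t)
    (hg : ∀ t ∈ Set.Ioo (0:ℝ) d₀, 1/(2*t) ≤ g t ∧ g t ≤ 1/t)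
    (hρ₀ : 0 < ρ₀) (hρ₀' : ρ₀ ≤ d₀/2) :
    ENNReal.ofReal (1/ρ₀^2)
        * (∫⁻ t in Set.Ioo (0:ℝ) ρ₀, ENNReal.ofReal (t * Real.exp (-2 * G t)))
      ≤ (∑' n : ℕ, ENNReal.ofReal
          ((4:ℝ)⁻¹^(n+1) * Real.exp (-2 * G ((2:ℝ)⁻¹^(n+1) * ρ₀))))
    ∧ (∑' n : ℕ, ENNReal.ofReal
          ((4:ℝ)⁻¹^(n+1) * Real.exp (-2 * G ((2:ℝ)⁻¹^(n+1) * ρ₀))))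
      ≤ ENNReal.ofReal (2/ρ₀^2)
        * (∫⁻ t in Set.Ioo (0:ℝ) (ρ₀/2), ENNReal.ofReal (t * Real.exp (-2 * G t))) := by
  -- notation
  set f : ℝ → ℝ := fun t => Real.exp (Real.log t - 2 * G t) with hf_def
  -- f agrees with t * exp(-2 G t) on positives
  have hfeq : ∀ t : ℝ, 0 < t → t * Real.exp (-2 * G t) = f t := by
    intro t ht
    simp only [hf_def]
    rw [Real.exp_sub, Real.exp_log ht, neg_mul, Real.exp_neg]
    rw [div_eq_mul_inv]
  -- antitone on Ioc 0 d₀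
  have hanti : AntitoneOn f (Set.Ioc 0 d₀) := by
    have hF : AntitoneOn (fun t => Real.log t - 2 * G t) (Set.Ioc 0 d₀) := by
      have hderiv : ∀ x ∈ Set.Ioo (0:ℝ) d₀,
          HasDerivAt (fun t => Real.log t - 2 * G t) (x⁻¹ - 2 * g x) x := by
        intro x hx
        have hx2 : x ∈ Set.Ioo (0:ℝ) (1/2) := ⟨hx.1, lt_trans hx.2 hd₀'⟩
        exact (Real.hasDerivAt_log (ne_of_gt hx.1)).sub ((hG x hx2).const_mul 2)
      apply antitoneOn_of_deriv_nonpos (convex_Ioc 0 d₀)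
      · intro x hx
        have hx2 : x ∈ Set.Ioo (0:ℝ) (1/2) := ⟨hx.1, lt_of_le_of_lt hx.2 hd₀'⟩
        exact ((Real.continuousAt_log (ne_of_gt hx.1)).continuousWithinAt).sub
          (continuousWithinAt_const.mul (hG x hx2).continuousAt.continuousWithinAt)
      · rw [interior_Ioc]
        intro x hx
        exact ((hderiv x hx).differentiableAt).differentiableWithinAt
      · rw [interior_Ioc]
        intro x hx
        rw [(hderiv x hx).deriv]
        have hgx := (hg x hx).1
        have hxpos := hx.1
        rw [div_le_iff₀ (by positivity)] at hgx
        rw [sub_nonpos, inv_eq_one_div, div_le_iff₀ hxpos]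
        linarith [hgx]
    intro a ha b hb hab
    exact Real.exp_le_exp.2 (hF ha hb hab)
  -- dyadic points
  have hhalf : (0:ℝ) < (2:ℝ)⁻¹ := by norm_num
  have htpos : ∀ n : ℕ, 0 < (2:ℝ)⁻¹^n * ρ₀ := fun n => by positivity
  have htmem : ∀ n : ℕ, (2:ℝ)⁻¹^n * ρ₀ ∈ Set.Ioc (0:ℝ) d₀ := by
    intro n
    refine ⟨htpos n, ?_⟩
    calc (2:ℝ)⁻¹^n * ρ₀ ≤ 1 * ρ₀ := by
          apply mul_le_mul_of_nonneg_right _ hρ₀.le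
          exact pow_le_one₀ (by norm_num) (by norm_num)
      _ = ρ₀ := one_mul _
      _ ≤ d₀ := by linarith
  have htstep : ∀ n : ℕ, (2:ℝ)⁻¹^n * ρ₀ - (2:ℝ)⁻¹^(n+1) * ρ₀ = (2:ℝ)⁻¹^(n+1) * ρ₀ := by
    intro n; rw [pow_succ]; ring
  -- convenient: f value at dyadic points
  have hfd : ∀ n : ℕ, f ((2:ℝ)⁻¹^(n+1) * ρ₀) * ((2:ℝ)⁻¹^(n+1) * ρ₀)
      = ρ₀^2 * ((4:ℝ)⁻¹^(n+1) * Real.exp (-2 * G ((2:ℝ)⁻¹^(n+1) * ρ₀))) := by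
    intro n
    rw [← hfeq _ (htpos (n+1))]
    have h4 : ((2:ℝ)⁻¹)^(n+1) * ((2:ℝ)⁻¹)^(n+1) = (4:ℝ)⁻¹^(n+1) := by
      rw [← mul_pow]; norm_num
    rw [← h4]; ring
  -- upper bound per interval
  have hub : ∀ n : ℕ, (∫⁻ t in Set.Ico ((2:ℝ)⁻¹^(n+1) * ρ₀) ((2:ℝ)⁻¹^n * ρ₀),
        ENNReal.ofReal (t * Real.exp (-2 * G t)))
      ≤ ENNReal.ofReal (ρ₀^2 * ((4:ℝ)⁻¹^(n+1) * Real.exp (-2 * G ((2:ℝ)⁻¹^(n+1) * ρ₀)))) := by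
    intro n
    have hb : ∀ x ∈ Set.Ico ((2:ℝ)⁻¹^(n+1)*ρ₀) ((2:ℝ)⁻¹^n*ρ₀),
        ENNReal.ofReal (x * Real.exp (-2 * G x))
          ≤ ENNReal.ofReal (f ((2:ℝ)⁻¹^(n+1)*ρ₀)) := by
      intro x hx
      have hx0 : 0 < x := lt_of_lt_of_le (htpos (n+1)) hx.1
      have hxm : x ∈ Set.Ioc 0 d₀ := ⟨hx0, le_trans hx.2.le (htmem n).2⟩
      rw [hfeq x hx0]
      exact ENNReal.ofReal_le_ofReal (hanti (htmem (n+1)) hxm hx.1)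
    calc (∫⁻ t in Set.Ico ((2:ℝ)⁻¹^(n+1)*ρ₀) ((2:ℝ)⁻¹^n*ρ₀),
            ENNReal.ofReal (t * Real.exp (-2 * G t)))
        ≤ ∫⁻ _ in Set.Ico ((2:ℝ)⁻¹^(n+1)*ρ₀) ((2:ℝ)⁻¹^n*ρ₀),
            ENNReal.ofReal (f ((2:ℝ)⁻¹^(n+1)*ρ₀)) :=
          lintegral_mono_ae ((ae_restrict_mem measurableSet_Ico).mono hb)
      _ = ENNReal.ofReal (f ((2:ℝ)⁻¹^(n+1)*ρ₀))
            * volume (Set.Ico ((2:ℝ)⁻¹^(n+1)*ρ₀) ((2:ℝ)⁻¹^n*ρ₀)) := setLIntegral_const _ _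
      _ = ENNReal.ofReal (f ((2:ℝ)⁻¹^(n+1)*ρ₀)) * ENNReal.ofReal ((2:ℝ)⁻¹^(n+1)*ρ₀) := by
            rw [Real.volume_Ico, htstep n]
      _ = ENNReal.ofReal (f ((2:ℝ)⁻¹^(n+1)*ρ₀) * ((2:ℝ)⁻¹^(n+1)*ρ₀)) :=
            (ENNReal.ofReal_mul (Real.exp_nonneg _)).symm
      _ = _ := by rw [hfd n]
  -- lower bound per interval
  have hlb : ∀ n : ℕ, ENNReal.ofReal (((2:ℝ)⁻¹^(n+2)*ρ₀) * f ((2:ℝ)⁻¹^(n+1)*ρ₀))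
      ≤ ∫⁻ t in Set.Ico ((2:ℝ)⁻¹^(n+2)*ρ₀) ((2:ℝ)⁻¹^(n+1)*ρ₀),
          ENNReal.ofReal (t * Real.exp (-2 * G t)) := by
    intro n
    have hb : ∀ x ∈ Set.Ico ((2:ℝ)⁻¹^(n+2)*ρ₀) ((2:ℝ)⁻¹^(n+1)*ρ₀),
        ENNReal.ofReal (f ((2:ℝ)⁻¹^(n+1)*ρ₀))
          ≤ ENNReal.ofReal (x * Real.exp (-2 * G x)) := by
      intro x hx
      have hx0 : 0 < x := lt_of_lt_of_le (htpos (n+2)) hx.1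
      have hxm : x ∈ Set.Ioc 0 d₀ := ⟨hx0, le_trans hx.2.le (htmem (n+1)).2⟩
      rw [hfeq x hx0]
      exact ENNReal.ofReal_le_ofReal (hanti hxm (htmem (n+1)) hx.2.le)
    calc ENNReal.ofReal (((2:ℝ)⁻¹^(n+2)*ρ₀) * f ((2:ℝ)⁻¹^(n+1)*ρ₀))
        = ENNReal.ofReal (f ((2:ℝ)⁻¹^(n+1)*ρ₀)) * ENNReal.ofReal ((2:ℝ)⁻¹^(n+2)*ρ₀) := by
          rw [← ENNReal.ofReal_mul (Real.exp_nonneg _), mul_comm]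
      _ = ENNReal.ofReal (f ((2:ℝ)⁻¹^(n+1)*ρ₀))
            * volume (Set.Ico ((2:ℝ)⁻¹^(n+2)*ρ₀) ((2:ℝ)⁻¹^(n+1)*ρ₀)) := by
          rw [Real.volume_Ico, htstep (n+1)]
      _ = ∫⁻ _ in Set.Ico ((2:ℝ)⁻¹^(n+2)*ρ₀) ((2:ℝ)⁻¹^(n+1)*ρ₀),
            ENNReal.ofReal (f ((2:ℝ)⁻¹^(n+1)*ρ₀)) := (setLIntegral_const _ _).symm
      _ ≤ _ := lintegral_mono_ae ((ae_restrict_mem measurableSet_Ico).mono hb)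
  constructor
  · -- left inequality
    rw [← dyadic_union ρ₀ hρ₀,
      lintegral_iUnion (fun n => measurableSet_Ico) (dyadic_disj ρ₀ hρ₀),
      ← ENNReal.tsum_mul_left]
    apply ENNReal.tsum_le_tsum
    intro n
    calc ENNReal.ofReal (1/ρ₀^2) * (∫⁻ t in Set.Ico ((2:ℝ)⁻¹^(n+1)*ρ₀) ((2:ℝ)⁻¹^n*ρ₀),
            ENNReal.ofReal (t * Real.exp (-2 * G t)))
        ≤ ENNReal.ofReal (1/ρ₀^2)
            * ENNReal.ofReal (ρ₀^2 * ((4:ℝ)⁻¹^(n+1) * Real.exp (-2 * G ((2:ℝ)⁻¹^(n+1) * ρ₀)))) :=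
          mul_le_mul_right (hub n) _
      _ = ENNReal.ofReal ((1/ρ₀^2)
            * (ρ₀^2 * ((4:ℝ)⁻¹^(n+1) * Real.exp (-2 * G ((2:ℝ)⁻¹^(n+1) * ρ₀))))) :=
          (ENNReal.ofReal_mul (by positivity)).symm
      _ = _ := by
          congr 1
          field_simp
  · -- right inequality
    rw [← dyadic_union (ρ₀/2) (by positivity),
      lintegral_iUnion (fun n => measurableSet_Ico) (dyadic_disj (ρ₀/2) (by positivity))]
    simp only [show ∀ n : ℕ, Set.Ico ((2:ℝ)⁻¹^(n+1)*(ρ₀/2)) ((2:ℝ)⁻¹^n*(ρ₀/2))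
        = Set.Ico ((2:ℝ)⁻¹^(n+2)*ρ₀) ((2:ℝ)⁻¹^(n+1)*ρ₀) from fun n => by congr 1 <;> ring]
    rw [← ENNReal.tsum_mul_left]
    apply ENNReal.tsum_le_tsum
    intro n
    calc ENNReal.ofReal ((4:ℝ)⁻¹^(n+1) * Real.exp (-2 * G ((2:ℝ)⁻¹^(n+1) * ρ₀)))
        = ENNReal.ofReal ((2/ρ₀^2) * (((2:ℝ)⁻¹^(n+2)*ρ₀) * f ((2:ℝ)⁻¹^(n+1)*ρ₀))) := by
          congr 1
          rw [← hfeq _ (htpos (n+1))]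
          have h4 : (4:ℝ)⁻¹^(n+1) = (2:ℝ)⁻¹^(n+1) * (2:ℝ)⁻¹^(n+1) := by
            rw [← mul_pow]; norm_num
          rw [h4]
          field_simp
          ring
      _ = ENNReal.ofReal (2/ρ₀^2)
            * ENNReal.ofReal (((2:ℝ)⁻¹^(n+2)*ρ₀) * f ((2:ℝ)⁻¹^(n+1)*ρ₀)) :=
          ENNReal.ofReal_mul (by positivity)
      _ ≤ _ := mul_le_mul_right (hlb n) _
end

section
/- Under the hypotheses of the previous statement, if lim_{ε→0⁺} ∫_ε^{ρ₀} t e^{−2G(t)} dt = ∞, then Σ_{n=1}^∞ 4^{−n} e^{−2G(2^{−n}ρ₀)} = ∞. -/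
open Real Set MeasureTheory Filter

theorem stmt9 (G g : ℝ → ℝ) (d₀ ρ₀ : ℝ) (hd₀ : 0 < d₀) (hd₀' : d₀ < 1/2)
    (hG : ∀ t ∈ Set.Ioo (0:ℝ) (1/2), HasDerivAt G (g t) t)
    (hg : ∀ t ∈ Set.Ioo (0:ℝ) d₀, 1/(2*t) ≤ g t ∧ g t ≤ 1/t)
    (hρ₀ : 0 < ρ₀) (hρ₀' : ρ₀ ≤ d₀/2)
    (hdiv : Filter.Tendsto (fun ε => ∫ t in ε..ρ₀, t * Real.exp (-2 * G t))
      (nhdsWithin 0 (Set.Ioi 0)) Filter.atTop) :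
    (∑' n : ℕ, ENNReal.ofReal
        ((4:ℝ)⁻¹^(n+1) * Real.exp (-2 * G ((2:ℝ)⁻¹^(n+1) * ρ₀)))) = ⊤ := by
  by_contra hS
  set x : ℕ → ℝ := fun n => (4:ℝ)⁻¹^(n+1) * Real.exp (-2 * G ((2:ℝ)⁻¹^(n+1) * ρ₀)) with hx
  have hxnn : ∀ n, 0 ≤ x n := fun n => by positivity
  set S := ∑' n : ℕ, ENNReal.ofReal (x n) with hSdef
  -- the dyadic points
  set a : ℕ → ℝ := fun n => (2:ℝ)⁻¹^n * ρ₀ with ha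
  have ha0 : a 0 = ρ₀ := by simp [ha]
  have hapos : ∀ n, 0 < a n := fun n => by positivity
  have hale : ∀ n, a n ≤ ρ₀ := by
    intro n
    have : (2:ℝ)⁻¹^n ≤ 1 := pow_le_one₀ (by norm_num) (by norm_num)
    calc a n ≤ 1 * ρ₀ := mul_le_mul_of_nonneg_right this hρ₀.le
    _ = ρ₀ := one_mul _
  have hasucc : ∀ n, 2 * a (n+1) = a n := by
    intro n; simp [ha, pow_succ]; ring
  have hsub : ∀ n, Set.Icc (a (n+1)) (a n) ⊆ Set.Ioo (0:ℝ) (1/2) := by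
    intro n t ht
    refine ⟨lt_of_lt_of_le (hapos (n+1)) ht.1, ?_⟩
    have : t ≤ d₀/2 := ht.2.trans ((hale n).trans hρ₀')
    linarith
  have hGc : ContinuousOn G (Set.Ioo (0:ℝ) (1/2)) := fun t ht =>
    ((hG t ht).continuousAt).continuousWithinAt
  have hfc : ContinuousOn (fun t => t * Real.exp (-2 * G t)) (Set.Ioo (0:ℝ) (1/2)) := by
    exact continuousOn_id.mul (((hGc.const_smul (-2:ℝ)).rexp))
  -- integrability on each dyadic piece
  have hint : ∀ n, IntervalIntegrable (fun t => t * Real.exp (-2 * G t)) volume (a (n+1)) (a n) := by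
    intro n
    apply (hfc.mono _).intervalIntegrable
    rw [Set.uIcc_of_le (by nlinarith [hasucc n, hapos (n+1)])]
    exact hsub n
  -- pointwise bound on each piece
  have hpt : ∀ n, ∀ t ∈ Set.Icc (a (n+1)) (a n),
      t * Real.exp (-2 * G t) ≤ a (n+1) * Real.exp (-2 * G (a (n+1))) := by
    intro n t ht
    set s := a (n+1)
    have hs : 0 < s := hapos (n+1)
    have hst : s ≤ t := ht.1
    have htd : t ≤ d₀ := ht.2.trans ((hale n).trans (by linarith))
    -- G t - (1/2) log t is monotone on [s,t]
    have hmono : MonotoneOn (fun u => G u - (1/2) * Real.log u) (Set.Icc s t) := by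
      apply monotoneOn_of_deriv_nonneg (convex_Icc s t)
      · apply ContinuousOn.sub
        · exact hGc.mono (fun u hu => ⟨lt_of_lt_of_le hs hu.1, lt_of_le_of_lt (hu.2.trans htd) hd₀'⟩)
        · exact (continuousOn_const.mul (Real.continuousOn_log.mono
            (fun u hu => ne_of_gt (lt_of_lt_of_le hs hu.1))))
      · intro u hu
        rw [interior_Icc] at hu
        have hu1 : 0 < u := lt_trans hs hu.1
        have hu2 : u ∈ Set.Ioo (0:ℝ) (1/2) := ⟨hu1, lt_of_le_of_lt (hu.2.le.trans htd) hd₀'⟩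
        exact ((hG u hu2).sub ((Real.hasDerivAt_log (ne_of_gt hu1)).const_mul (1/2))).differentiableAt.differentiableWithinAt
      · intro u hu
        rw [interior_Icc] at hu
        have hu1 : 0 < u := lt_trans hs hu.1
        have hu2 : u ∈ Set.Ioo (0:ℝ) (1/2) := ⟨hu1, lt_of_le_of_lt (hu.2.le.trans htd) hd₀'⟩
        have hd : HasDerivAt (fun u => G u - (1/2) * Real.log u) (g u - (1/2) * u⁻¹) u :=
          (hG u hu2).sub ((Real.hasDerivAt_log (ne_of_gt hu1)).const_mul (1/2))
        rw [hd.deriv]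
        have hgu := (hg u ⟨hu1, lt_of_lt_of_le hu.2 htd⟩).1
        have heq : 1/(2*u) = (1/2) * u⁻¹ := by field_simp
        rw [heq] at hgu
        linarith
    have key : G s - (1/2) * Real.log s ≤ G t - (1/2) * Real.log t :=
      hmono ⟨le_refl s, hst⟩ ⟨hst, le_refl t⟩ hst
    -- so -2 G t ≤ -2 G s - log t + log s
    have h1 : Real.exp (-2 * G t) ≤ Real.exp (-2 * G s) * (s / t) := by
      have : -2 * G t ≤ -2 * G s + (Real.log s - Real.log t) := by linarith
      calc Real.exp (-2 * G t) ≤ Real.exp (-2 * G s + (Real.log s - Real.log t)) :=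
            Real.exp_le_exp.mpr this
        _ = Real.exp (-2 * G s) * (Real.exp (Real.log s) / Real.exp (Real.log t)) := by
            rw [Real.exp_add, Real.exp_sub]
        _ = Real.exp (-2 * G s) * (s / t) := by
            rw [Real.exp_log hs, Real.exp_log (lt_of_lt_of_le hs hst)]
    have ht0 : 0 < t := lt_of_lt_of_le hs hst
    calc t * Real.exp (-2 * G t) ≤ t * (Real.exp (-2 * G s) * (s / t)) :=
          mul_le_mul_of_nonneg_left h1 ht0.le
      _ = s * Real.exp (-2 * G s) := by field_simp
  -- integral bound on each piece
  have hpiece : ∀ n, (∫ t in a (n+1)..(a n), t * Real.exp (-2 * G t)) ≤ ρ₀^2 * x n := by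
    intro n
    have hle : a (n+1) ≤ a n := by nlinarith [hasucc n, hapos (n+1)]
    have := intervalIntegral.integral_mono_on hle (hint n)
      (intervalIntegrable_const (c := a (n+1) * Real.exp (-2 * G (a (n+1))))) (hpt n)
    rw [intervalIntegral.integral_const] at this
    have hd : a n - a (n+1) = a (n+1) := by linarith [hasucc n]
    rw [hd, smul_eq_mul] at this
    refine this.trans (le_of_eq ?_)
    have : a (n+1) * (a (n+1) * Real.exp (-2 * G (a (n+1)))) =
        ((2:ℝ)⁻¹^(n+1) * ρ₀) * (((2:ℝ)⁻¹^(n+1) * ρ₀) * Real.exp (-2 * G ((2:ℝ)⁻¹^(n+1) * ρ₀))) := rfl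
    rw [this]
    simp only [hx]
    have h4 : ((2:ℝ)⁻¹^(n+1)) * ((2:ℝ)⁻¹^(n+1)) = (4:ℝ)⁻¹^(n+1) := by
      rw [← mul_pow]; norm_num
    rw [← h4]; ring
  -- partial sums bounded
  have hSne : S ≠ ⊤ := hS
  have hbound : ∀ N, (∫ t in a N..ρ₀, t * Real.exp (-2 * G t)) ≤ ρ₀^2 * S.toReal := by
    intro N
    have htel : ∑ n ∈ Finset.range N, (∫ t in a n..(a (n+1)), t * Real.exp (-2 * G t))
        = ∫ t in (a 0)..(a N), t * Real.exp (-2 * G t) :=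
      intervalIntegral.sum_integral_adjacent_intervals (fun k _ => (hint k).symm)
    have h1 : (∫ t in a N..ρ₀, t * Real.exp (-2 * G t))
        = ∑ n ∈ Finset.range N, (∫ t in a (n+1)..(a n), t * Real.exp (-2 * G t)) := by
      rw [← ha0, intervalIntegral.integral_symm, ← htel, ← Finset.sum_neg_distrib]
      exact Finset.sum_congr rfl fun n _ => (intervalIntegral.integral_symm _ _).symm
    rw [h1]
    have h2 : ∑ n ∈ Finset.range N, (∫ t in a (n+1)..(a n), t * Real.exp (-2 * G t))
        ≤ ∑ n ∈ Finset.range N, ρ₀^2 * x n :=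
      Finset.sum_le_sum fun n _ => hpiece n
    refine h2.trans ?_
    rw [← Finset.mul_sum]
    have h3 : ∑ n ∈ Finset.range N, x n ≤ S.toReal := by
      have h4 : ENNReal.ofReal (∑ n ∈ Finset.range N, x n)
          = ∑ n ∈ Finset.range N, ENNReal.ofReal (x n) :=
        ENNReal.ofReal_sum_of_nonneg fun n _ => hxnn n
      have h5 : ∑ n ∈ Finset.range N, ENNReal.ofReal (x n) ≤ S := ENNReal.sum_le_tsum _
      rw [← h4] at h5
      exact (ENNReal.ofReal_le_iff_le_toReal hSne).mp h5
    exact mul_le_mul_of_nonneg_left h3 (by positivity)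
  -- contradiction with divergence
  have hatend : Tendsto a atTop (nhdsWithin 0 (Set.Ioi 0)) := by
    apply tendsto_nhdsWithin_of_tendsto_nhds_of_eventually_within
    · have : Tendsto (fun n : ℕ => (2:ℝ)⁻¹^n) atTop (nhds 0) :=
        tendsto_pow_atTop_nhds_zero_of_lt_one (by norm_num) (by norm_num)
      simpa only [zero_mul] using this.mul_const ρ₀
    · exact Eventually.of_forall fun n => hapos n
  have hcomp : Tendsto (fun N => ∫ t in a N..ρ₀, t * Real.exp (-2 * G t)) atTop atTop :=
    hdiv.comp hatend
  obtain ⟨N, hN⟩ := (tendsto_atTop.mp hcomp (ρ₀^2 * S.toReal + 1)).exists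
  linarith [hbound N]
end

section
/- Define a(r) = (√3/2)/(1−r) − (1/2)(d + 1/√3)/((1−r) ln(1/(1−r))) − e(1/√3 − d/2) for 1−r ≤ 1/e (and a(r)=0 otherwise), where d > 1/√3. Then the associated radial potential satisfies, for r sufficiently close to 1: r² a(r)² + 3/(4r²) ≥ (3/4)/(1−r)² − ((d√3+1)/2)/((1−r)² ln(1/(1−r))). -/
open Real

lemma aux17 (t c E m s L r u v : ℝ) (ht : t^2 = 3) (ht0 : 0 < t) (hc : 0 < c)
    (hmE : |E| ≤ m) (hs0 : 0 < s) (hs1 : s < 1) (hr : r = 1 - s)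
    (hL : 1 ≤ L) (hu : u = 1/(s*L)) (hv : v = 1/s)
    (hcond : 4*((t+c)*m + 2*(t/2+c/2+m)^2)*v ≤ c^2*u^2) :
    r^2*(t/2*v - c/2*u - E)^2 + 3/(4*r^2) ≥ 3/4*v^2 - t*c/2*(u*v) := by
  have hL0 : (0:ℝ) < L := lt_of_lt_of_le one_pos hL
  have hu0 : 0 < u := by rw [hu]; positivity
  have hv0 : 0 < v := by rw [hv]; positivity
  have hv1 : 1 ≤ v := by rw [hv, le_div_iff₀ hs0]; linarith
  have huv : u ≤ v := by
    rw [hu, hv]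
    apply div_le_div_of_nonneg_left one_pos.le hs0
    nlinarith
  have hsv : s * v = 1 := by rw [hv]; field_simp
  have hm0 : 0 ≤ m := le_trans (abs_nonneg E) hmE
  have hE1 : E ≤ m := le_trans (le_abs_self E) hmE
  have hE2 : -m ≤ E := neg_le_of_abs_le hmE
  obtain ⟨M, hM⟩ : ∃ M : ℝ, M = t/2 + c/2 + m := ⟨_, rfl⟩
  obtain ⟨a, ha⟩ : ∃ a : ℝ, a = t/2*v - c/2*u - E := ⟨_, rfl⟩
  rw [← ha]
  rw [show 4*((t+c)*m + 2*(t/2+c/2+m)^2)*v = 4*((t+c)*m + 2*M^2)*v by rw [hM]] at hcond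
  have hr0 : 0 < r := by rw [hr]; linarith
  -- Step A : a^2 ≤ M^2 * v^2
  have hA : a^2 ≤ M^2 * v^2 := by
    have hvm : 0 ≤ (v - 1) * m := mul_nonneg (by linarith) hm0
    have h1 : 0 ≤ M*v - a := by
      rw [hM, ha]
      nlinarith [mul_nonneg hc.le hv0.le, mul_nonneg hc.le hu0.le]
    have h2 : 0 ≤ M*v + a := by
      rw [hM, ha]
      nlinarith [mul_nonneg ht0.le hv0.le,
        mul_nonneg hc.le (sub_nonneg.2 huv)]
    nlinarith [mul_nonneg h1 h2]
  -- Step B+C : r^2*a^2 ≥ a^2 - 2*M^2*v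
  have hBC : r^2*a^2 ≥ a^2 - 2*M^2*v := by
    have hb : r^2*a^2 = a^2 - 2*s*a^2 + s^2*a^2 := by rw [hr]; ring
    have hcs : s*a^2 ≤ M^2*v := by
      calc s*a^2 ≤ s*(M^2*v^2) := mul_le_mul_of_nonneg_left hA hs0.le
        _ = M^2*(s*v)*v := by ring
        _ = M^2*v := by rw [hsv]; ring
    have h0 : 0 ≤ s^2*a^2 := mul_nonneg (sq_nonneg s) (sq_nonneg a)
    linarith
  -- Step D : identity
  have hD : a^2 = 3/4*v^2 - t*c/2*(u*v) + c^2/4*u^2 + E^2 - t*v*E + c*u*E := by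
    rw [ha]; linear_combination (v^2/4) * ht
  -- Step E
  have hE : E^2 - t*v*E + c*u*E ≥ -((t+c)*m*v) := by
    have h1 : 0 ≤ (t*v)*(m - E) := mul_nonneg (mul_nonneg ht0.le hv0.le) (by linarith)
    have h2 : 0 ≤ (c*u)*(m + E) := mul_nonneg (mul_nonneg hc.le hu0.le) (by linarith)
    have h3 : 0 ≤ (c*(v-u))*m := mul_nonneg (mul_nonneg hc.le (by linarith)) hm0
    linarith [sq_nonneg E]
  have hF : 0 ≤ c^2/4*u^2 - ((t+c)*m + 2*M^2)*v := by linarith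
  have hpos : 0 ≤ 3/(4*r^2) := by positivity
  linarith [hBC, hD, hE, hF, hpos]

theorem stmt17 (d : ℝ) (hd : 1 / Real.sqrt 3 < d)
    (a : ℝ → ℝ)
    (ha : ∀ r : ℝ, a r = if 1 - r ≤ 1 / Real.exp 1 then
        Real.sqrt 3 / 2 * (1/(1-r))
          - (1/2) * (d + 1/Real.sqrt 3) * (1/((1-r) * Real.log (1/(1-r))))
          - Real.exp 1 * (1/Real.sqrt 3 - d/2)
      else 0) :
    ∃ r₁ : ℝ, r₁ < 1 ∧ ∀ r : ℝ, r₁ < r → r < 1 →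
      r^2 * (a r)^2 + 3/(4*r^2)
        ≥ (3/4) / (1-r)^2
          - ((d * Real.sqrt 3 + 1)/2) / ((1-r)^2 * Real.log (1/(1-r))) := by
  obtain ⟨t, ht'⟩ : ∃ t : ℝ, t = Real.sqrt 3 := ⟨_, rfl⟩
  have ht0 : 0 < t := by rw [ht']; exact Real.sqrt_pos.2 (by norm_num)
  have ht : t^2 = 3 := by rw [ht']; exact Real.sq_sqrt (by norm_num)
  obtain ⟨c, hc'⟩ : ∃ c : ℝ, c = d + 1/t := ⟨_, rfl⟩
  have hc : 0 < c := by
    have h1t : 0 < 1/t := by positivity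
    rw [hc', ht']; rw [← ht'] at hd ⊢; linarith
  obtain ⟨E, hE'⟩ : ∃ E : ℝ, E = Real.exp 1 * (1/t - d/2) := ⟨_, rfl⟩
  obtain ⟨m, hm'⟩ : ∃ m : ℝ, m = |E| := ⟨_, rfl⟩
  have hmE : |E| ≤ m := hm' ▸ le_refl _
  have hm0 : 0 ≤ m := hm' ▸ abs_nonneg E
  obtain ⟨C, hC'⟩ : ∃ C : ℝ, C = (t+c)*m + 2*(t/2+c/2+m)^2 := ⟨_, rfl⟩
  have hC0 : 0 < C := by
    rw [hC']
    have h1 : 0 ≤ (t+c)*m := mul_nonneg (by linarith) hm0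
    nlinarith [sq_nonneg (t/2+c/2+m)]
  obtain ⟨δ₀, hδ₀'⟩ : ∃ δ₀ : ℝ, δ₀ = (c^2/(36*C))^3 := ⟨_, rfl⟩
  have hδ₀ : 0 < δ₀ := by rw [hδ₀']; positivity
  obtain ⟨δ, hδ'⟩ : ∃ δ : ℝ, δ = min (1/Real.exp 1) δ₀ := ⟨_, rfl⟩
  have hδ0 : 0 < δ := by rw [hδ']; exact lt_min (by positivity) hδ₀
  refine ⟨1 - δ, by linarith, ?_⟩
  intro r hr1 hr2
  obtain ⟨s, hs'⟩ : ∃ s : ℝ, s = 1 - r := ⟨_, rfl⟩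
  have hs0 : 0 < s := by rw [hs']; linarith
  have hsδ : s < δ := by rw [hs']; linarith
  have hse : s ≤ 1/Real.exp 1 := le_trans hsδ.le (hδ' ▸ min_le_left _ _)
  have hsδ₀ : s ≤ δ₀ := le_trans hsδ.le (hδ' ▸ min_le_right _ _)
  have hs1 : s < 1 := by
    have : (1:ℝ)/Real.exp 1 < 1 := by
      rw [div_lt_one (exp_pos 1)]; exact lt_of_lt_of_le (by norm_num) (add_one_le_exp 1)
    linarith
  obtain ⟨L, hL'⟩ : ∃ L : ℝ, L = Real.log (1/s) := ⟨_, rfl⟩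
  have hL : 1 ≤ L := by
    rw [hL']
    have h1 : Real.exp 1 ≤ 1/s := by
      rw [le_div_iff₀ hs0, ← le_div_iff₀' (exp_pos 1)]
      simpa [one_div] using hse
    calc (1:ℝ) = Real.log (Real.exp 1) := (Real.log_exp 1).symm
      _ ≤ Real.log (1/s) := Real.log_le_log (exp_pos 1) h1
  have hL0 : 0 < L := lt_of_lt_of_le one_pos hL
  obtain ⟨u, hu⟩ : ∃ u : ℝ, u = 1/(s*L) := ⟨_, rfl⟩
  obtain ⟨v, hv⟩ : ∃ v : ℝ, v = 1/s := ⟨_, rfl⟩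
  -- key smallness estimate
  have hkey : 4*C*(s*L^2) ≤ c^2 := by
    obtain ⟨X, hX⟩ : ∃ X : ℝ, X = (1/s) ^ ((1:ℝ)/3) := ⟨_, rfl⟩
    have hX0 : 0 < X := by rw [hX]; positivity
    have hLX : L ≤ 3*X := by
      rw [hL', hX]
      have h1 : Real.log (1/s) = 3 * Real.log ((1/s) ^ ((1:ℝ)/3)) := by
        rw [Real.log_rpow (by positivity)]; ring
      have h2 : Real.log ((1/s) ^ ((1:ℝ)/3)) ≤ (1/s) ^ ((1:ℝ)/3) :=
        Real.log_le_self (by positivity)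
      linarith
    have hsX : s * X^2 = s ^ ((1:ℝ)/3) := by
      rw [hX, ← Real.rpow_natCast ((1/s) ^ ((1:ℝ)/3)) 2, ← Real.rpow_mul (by positivity)]
      rw [one_div, Real.inv_rpow hs0.le, ← Real.rpow_neg hs0.le]
      rw [show s * s ^ (-((1:ℝ)/3*(2:ℕ))) = s ^ (1:ℝ) * s ^ (-((1:ℝ)/3*(2:ℕ))) by
        rw [Real.rpow_one]]
      rw [← Real.rpow_add hs0]
      norm_num
    have hs13 : s ^ ((1:ℝ)/3) ≤ c^2/(36*C) := by
      have h1 : s ^ ((1:ℝ)/3) ≤ δ₀ ^ ((1:ℝ)/3) :=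
        Real.rpow_le_rpow hs0.le hsδ₀ (by norm_num)
      have h2 : δ₀ ^ ((1:ℝ)/3) = c^2/(36*C) := by
        rw [hδ₀', ← Real.rpow_natCast (c^2/(36*C)) 3, ← Real.rpow_mul (by positivity)]
        norm_num
      linarith [h2 ▸ h1]
    have hLL : L^2 ≤ (3*X)^2 := pow_le_pow_left₀ hL0.le hLX 2
    have h3 : s*L^2 ≤ 9*(s*X^2) := by nlinarith [mul_le_mul_of_nonneg_left hLL hs0.le]
    have h4 : 4*C*(s*L^2) ≤ 4*C*(9*(s*X^2)) :=
      mul_le_mul_of_nonneg_left h3 (by positivity)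
    have h5 : 4*C*(9*(s*X^2)) = 36*C*(s ^ ((1:ℝ)/3)) := by rw [hsX]; ring
    have h6 : 36*C*(s ^ ((1:ℝ)/3)) ≤ 36*C*(c^2/(36*C)) :=
      mul_le_mul_of_nonneg_left hs13 (by positivity)
    have h7 : 36*C*(c^2/(36*C)) = c^2 := by field_simp
    linarith
  have hcond : 4*((t+c)*m + 2*(t/2+c/2+m)^2)*v ≤ c^2*u^2 := by
    rw [← hC', hu, hv, div_pow, one_pow, mul_one_div, mul_one_div,
      div_le_div_iff₀ hs0 (by positivity)]
    calc 4*C*(s*L)^2 = 4*C*(s*L^2)*s := by ring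
      _ ≤ c^2*s := mul_le_mul_of_nonneg_right hkey hs0.le
  have main := aux17 t c E m s L r u v ht ht0 hc hmE hs0 hs1 (by rw [hs']; ring)
    hL hu hv hcond
  have hif : 1 - r ≤ 1/Real.exp 1 := hs' ▸ hse
  rw [ha r, if_pos hif]
  have hLne : Real.log (1/(1-r)) = L := by rw [hL', hs']
  have eqLHS : Real.sqrt 3 / 2 * (1/(1-r))
      - (1/2) * (d + 1/Real.sqrt 3) * (1/((1-r) * Real.log (1/(1-r))))
      - Real.exp 1 * (1/Real.sqrt 3 - d/2) = t/2*v - c/2*u - E := by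
    rw [← ht', hLne, ← hs', hE', hc', hu, hv]; ring
  have eqRHS : (3/4) / (1-r)^2
      - ((d * Real.sqrt 3 + 1)/2) / ((1-r)^2 * Real.log (1/(1-r)))
      = 3/4*v^2 - t*c/2*(u*v) := by
    rw [← ht', hLne, ← hs', hc', hu, hv]
    field_simp
  rw [eqLHS, eqRHS]
  exact main
end
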